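/- The quotient coalgebra structure of ARB is bijective: the map ε̄ : Exp/≡ → Finset (V ⊕ A × Exp/≡) is a bijection. In particular, the map ♥ sending a finite subset of V ⊕ A × Exp to the ≡-class of the formal sum of its elements (with each variable u contributing the term u, each pair (a, e) contributing the term a e, and the empty set contributing 0) induces a two-sided inverse to ε̄. -/

import Mathlib

/-- Milner's process terms (ARB): `e ::= 0 | v | e1 + e2 | a e | μv e`. -/
inductive Exp (V A : Type) : Type
  | zero : Exp V A
  | var : V → Exp V A
  | add : Exp V A → Exp V A → Exp V A
  | act : A → Exp V A → Exp V A
  | mu : V → Exp V A → Exp V A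
  deriving DecidableEq

namespace Exp

variable {V A : Type} [DecidableEq V] [DecidableEq A]

/-- Free variables. -/
def fv : Exp V A → Finset V
  | zero => ∅
  | var u => {u}
  | add e1 e2 => fv e1 ∪ fv e2
  | act _ e => fv e
  | mu u e => fv e \ {u}

/-- Bound variables. -/
def bv : Exp V A → Finset V
  | zero => ∅
  | var _ => ∅
  | add e1 e2 => bv e1 ∪ bv e2
  | act _ e => bv e
  | mu u e => insert u (bv e)

/-- Syntactic substitution `e[f/v]`, replacing free occurrences of `v` by `f`
(capture-avoiding on the pairs `(e, f)` for which no free variable of `f` is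
bound in `e`, which is the situation in which it is well-defined). -/
def subst (f : Exp V A) (v : V) : Exp V A → Exp V A
  | zero => zero
  | var u => if u = v then f else var u
  | add e1 e2 => add (subst f v e1) (subst f v e2)
  | act a e => act a (subst f v e)
  | mu u e => if u = v then mu u e else mu u (subst f v e)

/-- Guarded syntactic substitution `e[g//v]`: replaces every guarded free
occurrence of `v` by `g` and every unguarded free occurrence by `0`. -/
def gsubst (g : Exp V A) (v : V) : Exp V A → Exp V A
  | zero => zero
  | var u => if u = v then zero else var u
  | add e1 e2 => add (gsubst g v e1) (gsubst g v e2)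
  | act a e => act a (subst g v e)
  | mu u e => if u = v then mu u e else mu u (gsubst g v e)

/-- Apply a function to the expression component of a step. -/
def liftStep (f : Exp V A → Exp V A) : V ⊕ A × Exp V A → V ⊕ A × Exp V A
  | Sum.inl u => Sum.inl u
  | Sum.inr (a, e) => Sum.inr (a, f e)

/-- The Finset-level guarded substitution operator `[g//v]`: removes the
element `v`, keeps all other variables, and replaces each pair `(a, f)` by
`(a, f[g/v])`. -/
def fgsubst (g : Exp V A) (v : V) (s : Finset (V ⊕ A × Exp V A)) :
    Finset (V ⊕ A × Exp V A) :=
  (s.erase (Sum.inl v)).image (liftStep (subst g v))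

/-- The operational semantics `ε : Exp → Finset (V ⊕ A × Exp)`. -/
def eps : Exp V A → Finset (V ⊕ A × Exp V A)
  | zero => ∅
  | var u => {Sum.inl u}
  | add e1 e2 => eps e1 ∪ eps e2
  | act a e => {Sum.inr (a, e)}
  | mu v e => fgsubst (mu v e) v (eps e)

/-- `v` is guarded in `e`. -/
def Guarded (v : V) : Exp V A → Prop
  | zero => True
  | var u => u ≠ v
  | add e1 e2 => Guarded v e1 ∧ Guarded v e2
  | act _ _ => True
  | mu u e => u = v ∨ Guarded v e

/-- Milner's provable equivalence `≡`: the smallest congruence containing the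
semilattice axioms and the recursion axioms (R1), (R2), closed under (R3). -/
inductive Equiv : Exp V A → Exp V A → Prop
  | refl (e) : Equiv e e
  | symm {e f} : Equiv e f → Equiv f e
  | trans {e f g} : Equiv e f → Equiv f g → Equiv e g
  | addCongr {e1 f1 e2 f2} : Equiv e1 f1 → Equiv e2 f2 → Equiv (add e1 e2) (add f1 f2)
  | actCongr (a) {e f} : Equiv e f → Equiv (act a e) (act a f)
  | muCongr (v) {e f} : Equiv e f → Equiv (mu v e) (mu v f)
  | addZero (e) : Equiv (add e zero) e
  | addIdem (e) : Equiv (add e e) e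
  | addComm (e f) : Equiv (add e f) (add f e)
  | addAssoc (e f g) : Equiv (add (add e f) g) (add e (add f g))
  | r1 (v e) : Equiv (mu v e) (gsubst (mu v e) v e)
  | r2 (v w e) : w ∉ fv e → Equiv (mu v e) (mu w (subst (var w) v e))
  | r3 {v e g} : Equiv g (subst g v e) → Guarded v e → Equiv g (mu v e)

/-- Bisimulations on the operational model of ARB. -/
def IsBisimulation (R : Exp V A → Exp V A → Prop) : Prop :=
  ∀ e f, R e f →
    (∀ u : V, Sum.inl u ∈ eps e ↔ Sum.inl u ∈ eps f) ∧
    (∀ (a : A) (e' : Exp V A), Sum.inr (a, e') ∈ eps e →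
        ∃ f', Sum.inr (a, f') ∈ eps f ∧ R e' f') ∧
    (∀ (a : A) (f' : Exp V A), Sum.inr (a, f') ∈ eps f →
        ∃ e', Sum.inr (a, e') ∈ eps e ∧ R e' f')

/-- Bisimilarity `e ~ f`. -/
def Bisim (e f : Exp V A) : Prop := ∃ R, IsBisimulation R ∧ R e f

end Exp

/-- The setoid of process terms modulo provable equivalence `≡`. -/
def expSetoid (V A : Type) [DecidableEq V] [DecidableEq A] : Setoid (Exp V A) :=
  ⟨Exp.Equiv, ⟨Exp.Equiv.refl, fun h => h.symm, fun h h' => h.trans h'⟩⟩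

noncomputable instance {V A : Type} [DecidableEq V] [DecidableEq A] :
    DecidableEq (Quotient (expSetoid V A)) := Classical.decEq _

namespace Exp

variable {V A : Type} [DecidableEq V] [DecidableEq A]

/-- The map on steps sending each variable `u` to itself and each pair
`(a, g)` to `(a, [g]≡)`. -/
def qstep : V ⊕ A × Exp V A → V ⊕ A × Quotient (expSetoid V A)
  | Sum.inl u => Sum.inl u
  | Sum.inr (a, g) => Sum.inr (a, Quotient.mk (expSetoid V A) g)

end Exp

namespace Exp

variable {V A : Type} [DecidableEq V] [DecidableEq A]

/-- The term associated to a single step: a variable `u` contributes the term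
`u`, and a pair `(a, e)` contributes the term `a e`. -/
def toTerm : V ⊕ A × Exp V A → Exp V A
  | Sum.inl u => var u
  | Sum.inr (a, e) => act a e

/-- The formal sum of the elements of a finite subset of `V ⊕ A × Exp`
(with a fixed order and bracketing; the empty set contributes `0`). -/
noncomputable def formalSum (s : Finset (V ⊕ A × Exp V A)) : Exp V A :=
  (s.toList.map toTerm).foldr add zero

end Exp

namespace Exp

variable {V A : Type} [DecidableEq V] [DecidableEq A]

/-- Sum of a list of steps. -/
noncomputable def sumList (l : List (V ⊕ A × Exp V A)) : Exp V A :=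
  (l.map toTerm).foldr add zero

theorem formalSum_eq (s : Finset (V ⊕ A × Exp V A)) :
    formalSum s = sumList s.toList := rfl

theorem sumList_nil : sumList ([] : List (V ⊕ A × Exp V A)) = zero := rfl

theorem sumList_cons (x : V ⊕ A × Exp V A) (l) :
    sumList (x :: l) = add (toTerm x) (sumList l) := rfl

theorem eps_toTerm (x : V ⊕ A × Exp V A) : eps (toTerm x) = {x} := by
  rcases x with u | ⟨a, e⟩ <;> rfl

theorem eps_sumList (l : List (V ⊕ A × Exp V A)) : eps (sumList l) = l.toFinset := by
  induction l with
  | nil => rfl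
  | cons x l ih =>
    rw [sumList_cons]
    show eps (toTerm x) ∪ eps (sumList l) = _
    rw [eps_toTerm, ih, List.toFinset_cons, Finset.insert_eq]

theorem zero_add_equiv (e : Exp V A) : Equiv (add zero e) e :=
  (Equiv.addComm _ _).trans (Equiv.addZero e)

theorem swap_left (x y e : Exp V A) : Equiv (add x (add y e)) (add y (add x e)) :=
  ((Equiv.addAssoc x y e).symm.trans
    (Equiv.addCongr (Equiv.addComm x y) (Equiv.refl e))).trans (Equiv.addAssoc y x e)

theorem absorb {x : V ⊕ A × Exp V A} {l} (hx : x ∈ l) :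
    Equiv (add (toTerm x) (sumList l)) (sumList l) := by
  induction l with
  | nil => cases hx
  | cons y l ih =>
    rcases List.mem_cons.mp hx with rfl | h
    · exact (Equiv.addAssoc (toTerm x) (toTerm x) (sumList l)).symm.trans
        (Equiv.addCongr (Equiv.addIdem _) (Equiv.refl _))
    · exact (swap_left _ _ _).trans
        ((Equiv.addCongr (Equiv.refl _) (ih h)).trans (Equiv.refl _))

theorem absorb' {x y : V ⊕ A × Exp V A} {l} (hxy : Equiv (toTerm x) (toTerm y))
    (hy : y ∈ l) : Equiv (add (toTerm x) (sumList l)) (sumList l) :=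
  (Equiv.addCongr hxy (Equiv.refl _)).trans (absorb hy)

theorem sumAbsorb {l m : List (V ⊕ A × Exp V A)}
    (h : ∀ x ∈ l, ∃ y ∈ m, Equiv (toTerm x) (toTerm y)) :
    Equiv (add (sumList l) (sumList m)) (sumList m) := by
  induction l with
  | nil => exact zero_add_equiv _
  | cons x l ih =>
    obtain ⟨y, hy, hxy⟩ := h x List.mem_cons_self
    exact (Equiv.addAssoc (toTerm x) (sumList l) (sumList m)).trans
      ((Equiv.addCongr (Equiv.refl _) (ih fun z hz => h z (List.mem_cons_of_mem _ hz))).trans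
        (absorb' hxy hy))

theorem sumList_congr {l m : List (V ⊕ A × Exp V A)}
    (h1 : ∀ x ∈ l, ∃ y ∈ m, Equiv (toTerm x) (toTerm y))
    (h2 : ∀ y ∈ m, ∃ x ∈ l, Equiv (toTerm y) (toTerm x)) :
    Equiv (sumList l) (sumList m) :=
  ((sumAbsorb h2).symm.trans (Equiv.addComm _ _)).trans (sumAbsorb h1)

theorem sumList_equiv_of_mem {l m : List (V ⊕ A × Exp V A)}
    (h : ∀ x, x ∈ l ↔ x ∈ m) : Equiv (sumList l) (sumList m) :=
  sumList_congr (fun x hx => ⟨x, (h x).mp hx, Equiv.refl _⟩)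
    (fun y hy => ⟨y, (h y).mpr hy, Equiv.refl _⟩)

theorem sumList_append (l m : List (V ⊕ A × Exp V A)) :
    Equiv (sumList (l ++ m)) (add (sumList l) (sumList m)) := by
  induction l with
  | nil => exact (zero_add_equiv _).symm
  | cons x l ih =>
    exact (Equiv.addCongr (Equiv.refl (toTerm x)) ih).trans
      (Equiv.addAssoc (toTerm x) (sumList l) (sumList m)).symm

theorem subst_congr {g g' : Exp V A} (h : Equiv g g') (v : V) :
    ∀ e : Exp V A, Equiv (subst g v e) (subst g' v e)
  | zero => Equiv.refl _
  | var u => by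
    by_cases hu : u = v
    · simpa [subst, hu] using h
    · simp only [subst, if_neg hu]; exact Equiv.refl _
  | add e1 e2 => Equiv.addCongr (subst_congr h v e1) (subst_congr h v e2)
  | act a e => Equiv.actCongr a (subst_congr h v e)
  | mu u e => by
    by_cases hu : u = v
    · simp only [subst, if_pos hu]; exact Equiv.refl _
    · simp only [subst, if_neg hu]; exact Equiv.muCongr u (subst_congr h v e)

theorem toTerm_liftStep_congr {g g' : Exp V A} (h : Equiv g g') (v : V)
    (x : V ⊕ A × Exp V A) :
    Equiv (toTerm (liftStep (subst g v) x)) (toTerm (liftStep (subst g' v) x)) := by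
  rcases x with u | ⟨a, e⟩
  · exact Equiv.refl _
  · exact Equiv.actCongr a (subst_congr h v e)

/-- List version of the Finset-level guarded substitution. -/
noncomputable def glist (g : Exp V A) (v : V) : List (V ⊕ A × Exp V A) → List (V ⊕ A × Exp V A)
  | [] => []
  | x :: l => if x = Sum.inl v then glist g v l else liftStep (subst g v) x :: glist g v l

theorem glist_toFinset (g : Exp V A) (v : V) (l : List (V ⊕ A × Exp V A)) :
    (glist g v l).toFinset = fgsubst g v l.toFinset := by
  induction l with
  | nil => simp [glist, fgsubst]
  | cons x l ih =>
    by_cases hx : x = Sum.inl v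
    · subst hx
      simp [glist, fgsubst, ih, Finset.erase_insert_eq_erase]
    · simp only [glist, if_neg hx, List.toFinset_cons, fgsubst,
        Finset.erase_insert_of_ne hx, Finset.image_insert]
      rw [ih, fgsubst]

theorem gsubst_toTerm {g : Exp V A} {v : V} {x : V ⊕ A × Exp V A} (hx : x ≠ Sum.inl v) :
    gsubst g v (toTerm x) = toTerm (liftStep (subst g v) x) := by
  rcases x with u | ⟨a, e⟩
  · have hu : u ≠ v := fun h => hx (by rw [h])
    simp [toTerm, gsubst, liftStep, if_neg hu]
  · rfl

theorem gsubst_sumList (g : Exp V A) (v : V) (l : List (V ⊕ A × Exp V A)) :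
    Equiv (gsubst g v (sumList l)) (sumList (glist g v l)) := by
  induction l with
  | nil => exact Equiv.refl _
  | cons x l ih =>
    by_cases hx : x = Sum.inl v
    · subst hx
      show Equiv (add (gsubst g v (toTerm (Sum.inl v))) (gsubst g v (sumList l))) _
      simp only [glist, if_pos rfl, toTerm, gsubst, if_pos rfl]
      exact (zero_add_equiv _).trans ih
    · show Equiv (add (gsubst g v (toTerm x)) (gsubst g v (sumList l))) _
      rw [gsubst_toTerm hx]
      simp only [glist, if_neg hx]
      exact Equiv.addCongr (Equiv.refl _) ih

theorem gsubst_formalSum (g : Exp V A) (v : V) (s : Finset (V ⊕ A × Exp V A)) :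
    Equiv (gsubst g v (formalSum s)) (formalSum (fgsubst g v s)) := by
  refine (gsubst_sumList g v s.toList).trans (sumList_equiv_of_mem fun x => ?_)
  rw [show (x ∈ glist g v s.toList) ↔ x ∈ (glist g v s.toList).toFinset from
      List.mem_toFinset.symm, glist_toFinset, Finset.toList_toFinset, Finset.mem_toList]

theorem formalSum_fgsubst_congr {g g' : Exp V A} (h : Equiv g g') (v : V)
    (s : Finset (V ⊕ A × Exp V A)) :
    Equiv (formalSum (fgsubst g v s)) (formalSum (fgsubst g' v s)) := by
  rw [formalSum_eq, formalSum_eq]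
  refine sumList_congr ?_ ?_
  · intro x hx
    rw [Finset.mem_toList, fgsubst, Finset.mem_image] at hx
    obtain ⟨z, hz, rfl⟩ := hx
    exact ⟨liftStep (subst g' v) z,
      Finset.mem_toList.mpr (Finset.mem_image_of_mem _ hz), toTerm_liftStep_congr h v z⟩
  · intro x hx
    rw [Finset.mem_toList, fgsubst, Finset.mem_image] at hx
    obtain ⟨z, hz, rfl⟩ := hx
    exact ⟨liftStep (subst g v) z,
      Finset.mem_toList.mpr (Finset.mem_image_of_mem _ hz), toTerm_liftStep_congr h.symm v z⟩

/-- Every term is provably equivalent to the formal sum of its derivatives. -/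
theorem equiv_formalSum (e : Exp V A) : Equiv e (formalSum (eps e)) := by
  induction e with
  | zero =>
    show Equiv zero (formalSum ∅)
    rw [formalSum_eq, Finset.toList_empty]
    exact Equiv.refl _
  | var u =>
    show Equiv (var u) (formalSum {Sum.inl u})
    rw [formalSum_eq, Finset.toList_singleton]
    exact (Equiv.addZero (var u)).symm
  | add e1 e2 ih1 ih2 =>
    show Equiv (add e1 e2) (formalSum (eps e1 ∪ eps e2))
    refine ((Equiv.addCongr ih1 ih2).trans ?_)
    refine ((sumList_append (eps e1).toList (eps e2).toList).symm.trans ?_)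
    rw [formalSum_eq]
    exact sumList_equiv_of_mem fun x => by
      simp [Finset.mem_toList, Finset.mem_union]
  | act a e ih =>
    show Equiv (act a e) (formalSum {Sum.inr (a, e)})
    rw [formalSum_eq, Finset.toList_singleton]
    exact (Equiv.addZero (act a e)).symm
  | mu v e ih =>
    show Equiv (mu v e) (formalSum (fgsubst (mu v e) v (eps e)))
    have h1 : Equiv (mu v e) (mu v (formalSum (eps e))) := Equiv.muCongr v ih
    have h2 := Equiv.r1 v (formalSum (eps e))
    have h3 := gsubst_formalSum (mu v (formalSum (eps e))) v (eps e)
    have h4 := formalSum_fgsubst_congr (V := V) (A := A) h1.symm v (eps e)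
    exact ((h1.trans h2).trans h3).trans h4

theorem toTerm_equiv_of_qstep {x y : V ⊕ A × Exp V A} (h : qstep x = qstep y) :
    Equiv (toTerm x) (toTerm y) := by
  rcases x with u | ⟨a, e⟩ <;> rcases y with u' | ⟨a', e'⟩ <;>
    simp only [qstep] at h
  · cases h; exact Equiv.refl _
  · cases h
  · cases h
  · simp only [Sum.inr.injEq, Prod.mk.injEq] at h
    obtain ⟨rfl, he⟩ := h
    exact Equiv.actCongr a (Quotient.exact he)

theorem formalSum_congr_of_image {s t : Finset (V ⊕ A × Exp V A)}
    (h : s.image qstep = t.image qstep) :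
    Equiv (formalSum s) (formalSum t) := by
  rw [formalSum_eq, formalSum_eq]
  refine sumList_congr ?_ ?_
  · intro x hx
    rw [Finset.mem_toList] at hx
    have : qstep x ∈ t.image qstep := h ▸ Finset.mem_image_of_mem _ hx
    obtain ⟨y, hy, hxy⟩ := Finset.mem_image.mp this
    exact ⟨y, Finset.mem_toList.mpr hy, toTerm_equiv_of_qstep hxy.symm⟩
  · intro y hy
    rw [Finset.mem_toList] at hy
    have : qstep y ∈ s.image qstep := h.symm ▸ Finset.mem_image_of_mem _ hy
    obtain ⟨x, hx, hxy⟩ := Finset.mem_image.mp this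
    exact ⟨x, Finset.mem_toList.mpr hx, toTerm_equiv_of_qstep hxy.symm⟩

/-- A section of `qstep` choosing representatives. -/
noncomputable def unqstep : V ⊕ A × Quotient (expSetoid V A) → V ⊕ A × Exp V A
  | Sum.inl u => Sum.inl u
  | Sum.inr (a, q) => Sum.inr (a, q.out)

theorem qstep_unqstep (x : V ⊕ A × Quotient (expSetoid V A)) : qstep (unqstep x) = x := by
  rcases x with u | ⟨a, q⟩
  · rfl
  · simp [unqstep, qstep, Quotient.out_eq]

theorem image_qstep_unqstep (t : Finset (V ⊕ A × Quotient (expSetoid V A))) :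
    (t.image unqstep).image qstep = t := by
  rw [Finset.image_image]
  ext x
  simp [Function.comp, qstep_unqstep]

end Exp

/-- The quotient coalgebra structure of ARB is bijective: `ε̄` is a bijection,
and the map `♥`, sending a finite subset of `V ⊕ A × Exp` to the `≡`-class of
the formal sum of its elements, induces a two-sided inverse to `ε̄`. -/
theorem arb_epsbar_bijective {V A : Type} [DecidableEq V] [DecidableEq A]
    [Countable V] [Infinite V]
    (εbar : Quotient (expSetoid V A) → Finset (V ⊕ A × Quotient (expSetoid V A)))
    (hεbar : ∀ e : Exp V A,
      εbar (Quotient.mk (expSetoid V A) e) = (Exp.eps e).image Exp.qstep) :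
    Function.Bijective εbar ∧
    ∃ heart : Finset (V ⊕ A × Quotient (expSetoid V A)) → Quotient (expSetoid V A),
      (∀ s : Finset (V ⊕ A × Exp V A),
          heart (s.image Exp.qstep) = Quotient.mk (expSetoid V A) (Exp.formalSum s)) ∧
      (∀ x, heart (εbar x) = x) ∧
      (∀ t, εbar (heart t) = t) := by
  classical
  set heart : Finset (V ⊕ A × Quotient (expSetoid V A)) → Quotient (expSetoid V A) :=
    fun t => Quotient.mk (expSetoid V A) (Exp.formalSum (t.image Exp.unqstep)) with hheart
  have himg : ∀ s : Finset (V ⊕ A × Exp V A),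
      heart (s.image Exp.qstep) = Quotient.mk (expSetoid V A) (Exp.formalSum s) := by
    intro s
    refine Quotient.sound (Exp.formalSum_congr_of_image ?_)
    rw [Exp.image_qstep_unqstep]
  have heps : ∀ s : Finset (V ⊕ A × Exp V A), Exp.eps (Exp.formalSum s) = s := by
    intro s
    rw [Exp.formalSum_eq, Exp.eps_sumList, Finset.toList_toFinset]
  have hright : ∀ t, εbar (heart t) = t := by
    intro t
    rw [hheart]
    simp only
    rw [hεbar, heps, Exp.image_qstep_unqstep]
  have hleft : ∀ x, heart (εbar x) = x := by
    intro x
    induction x using Quotient.inductionOn with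
    | h e =>
      rw [hεbar, himg]
      exact Quotient.sound (Exp.equiv_formalSum e).symm
  have hinj : Function.Injective εbar := by
    intro x y h
    rw [← hleft x, ← hleft y, h]
  have hsurj : Function.Surjective εbar := fun t => ⟨heart t, hright t⟩
  exact ⟨⟨hinj, hsurj⟩, heart, himg, hleft, hright⟩
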